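/- Let a, b, c ≥ 1 and let T : {1,…,a} × {1,…,b} × {1,…,c} → ℝ be an order-3 real tensor (e.g. a convolutional weight tensor). Let M₁ be the c×(a·b) matrix flattening of T defined by M₁(k, (i,j)) = T(i,j,k), and let M₂ be the (b·c)×a matrix flattening defined by M₂((j,k), i) = T(i,j,k). Then ‖M₁‖₂² ≤ min(a, b) · ‖M₂‖₂²; equivalently, (1/min(a,b))‖M₁‖₂² ≤ ‖M₂‖₂², so the largest singular values of the two flattenings of the same tensor are comparable up to a factor of min(a,b). -/

import Mathlib

set_option maxHeartbeats 1000000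

open Matrix

/-- The spectral norm (largest singular value) of a real matrix: its operator norm
as a linear map between Euclidean `ℓ²` spaces. -/
noncomputable def matrixSpectralNormL2 {m n : Type*} [Fintype m] [Fintype n] [DecidableEq n]
    (M : Matrix m n ℝ) : ℝ :=
  ‖LinearMap.toContinuousLinearMap (Matrix.toEuclideanLin M)‖

lemma toEL_apply {m n : Type*} [Fintype m] [Fintype n] [DecidableEq n]
    (M : Matrix m n ℝ) (x : EuclideanSpace ℝ n) (k : m) :
    (Matrix.toEuclideanLin M x) k = ∑ j, M k j * x j := by
  simp [Matrix.toEuclideanLin, Matrix.mulVec, dotProduct]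

lemma eunorm_eq {c : Type*} [Fintype c] (u : EuclideanSpace ℝ c) :
    ‖u‖ = Real.sqrt (∑ k, u k ^ 2) := by
  rw [EuclideanSpace.norm_eq]; simp [sq_abs]

lemma spectral_nonneg {m n : Type*} [Fintype m] [Fintype n] [DecidableEq n]
    (M : Matrix m n ℝ) : 0 ≤ matrixSpectralNormL2 M := norm_nonneg _

lemma le_spectral {m n : Type*} [Fintype m] [Fintype n] [DecidableEq n]
    (M : Matrix m n ℝ) (x : EuclideanSpace ℝ n) :
    ‖Matrix.toEuclideanLin M x‖ ≤ matrixSpectralNormL2 M * ‖x‖ := by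
  simpa [matrixSpectralNormL2] using (LinearMap.toContinuousLinearMap (Matrix.toEuclideanLin M)).le_opNorm x

lemma spectral_le {m n : Type*} [Fintype m] [Fintype n] [DecidableEq n]
    (M : Matrix m n ℝ) {C : ℝ} (hC : 0 ≤ C)
    (h : ∀ x : EuclideanSpace ℝ n, ‖Matrix.toEuclideanLin M x‖ ≤ C * ‖x‖) :
    matrixSpectralNormL2 M ≤ C :=
  ContinuousLinearMap.opNorm_le_bound _ hC fun x => by simpa using h x

lemma sum_le_sqrt_card_mul {n : Type*} [Fintype n] (r : n → ℝ) (hr : ∀ s, 0 ≤ r s) :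
    ∑ s, r s ≤ Real.sqrt (Fintype.card n) * Real.sqrt (∑ s, r s ^ 2) := by
  have h := Finset.sum_mul_sq_le_sq_mul_sq Finset.univ (fun _ => (1 : ℝ)) r
  simp only [one_mul, one_pow, Finset.sum_const, Finset.card_univ, nsmul_eq_mul, mul_one] at h
  have h0 : (0:ℝ) ≤ ∑ s, r s := Finset.sum_nonneg fun s _ => hr s
  calc ∑ s, r s = Real.sqrt ((∑ s, r s) ^ 2) := (Real.sqrt_sq h0).symm
    _ ≤ Real.sqrt ((Fintype.card n : ℝ) * ∑ s, r s ^ 2) := Real.sqrt_le_sqrt h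
    _ = Real.sqrt (Fintype.card n) * Real.sqrt (∑ s, r s ^ 2) := Real.sqrt_mul (by positivity) _

lemma key_decomp {n c : Type*} [Fintype n] [Fintype c]
    (u : n → EuclideanSpace ℝ c) (r : n → ℝ) (C : ℝ) (hC : 0 ≤ C)
    (hr : ∀ s, 0 ≤ r s) (h : ∀ s, ‖u s‖ ≤ C * r s) :
    ‖∑ s, u s‖ ≤ Real.sqrt (Fintype.card n) * C * Real.sqrt (∑ s, r s ^ 2) := by
  calc ‖∑ s, u s‖ ≤ ∑ s, ‖u s‖ := norm_sum_le _ _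
    _ ≤ ∑ s, C * r s := Finset.sum_le_sum fun s _ => h s
    _ = C * ∑ s, r s := by rw [Finset.mul_sum]
    _ ≤ C * (Real.sqrt (Fintype.card n) * Real.sqrt (∑ s, r s ^ 2)) :=
        mul_le_mul_of_nonneg_left (sum_le_sqrt_card_mul r hr) hC
    _ = Real.sqrt (Fintype.card n) * C * Real.sqrt (∑ s, r s ^ 2) := by ring

/-- **The largest singular values of two flattenings of the same order-3 tensor are
comparable.** For `T : ℝ^{a×b×c}`, with `M₁` the `c×(a·b)` flattening
`M₁(k,(i,j)) = T(i,j,k)` and `M₂` the `(b·c)×a` flattening `M₂((j,k),i) = T(i,j,k)`,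
one has `‖M₁‖₂² ≤ min(a,b) · ‖M₂‖₂²`. -/
theorem tensor_flattening_spectral_norm
    (a b c : ℕ) (ha : 1 ≤ a) (hb : 1 ≤ b) (hc : 1 ≤ c)
    (T : Fin a → Fin b → Fin c → ℝ)
    (M₁ : Matrix (Fin c) (Fin a × Fin b) ℝ)
    (M₂ : Matrix (Fin b × Fin c) (Fin a) ℝ)
    (hM₁ : ∀ (k : Fin c) (i : Fin a) (j : Fin b), M₁ k (i, j) = T i j k)
    (hM₂ : ∀ (j : Fin b) (k : Fin c) (i : Fin a), M₂ (j, k) i = T i j k) :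
    matrixSpectralNormL2 M₁ ^ 2 ≤ (min a b : ℕ) * matrixSpectralNormL2 M₂ ^ 2 := by
  set N₂ := matrixSpectralNormL2 M₂ with hN₂def
  have hN₂ : 0 ≤ N₂ := spectral_nonneg M₂
  have hN₁ : 0 ≤ matrixSpectralNormL2 M₁ := spectral_nonneg M₁
  -- norm of x splits as sum over columns
  -- Bound with factor √b
  have boundB : matrixSpectralNormL2 M₁ ≤ Real.sqrt b * N₂ := by
    apply spectral_le M₁ (by positivity)
    intro x
    set u : Fin b → EuclideanSpace ℝ (Fin c) :=
      fun j => WithLp.toLp 2 (fun k => ∑ i, T i j k * x (i, j) : Fin c → ℝ) with hu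
    set v : Fin b → EuclideanSpace ℝ (Fin a) :=
      fun j => WithLp.toLp 2 (fun i => x (i, j) : Fin a → ℝ) with hv
    have hsum : Matrix.toEuclideanLin M₁ x = ∑ j, u j := by
      ext k
      rw [WithLp.ofLp_sum, Finset.sum_apply, toEL_apply]
      rw [Fintype.sum_prod_type]
      rw [Finset.sum_comm]
      simp [hu, hM₁]
    have hub : ∀ j, ‖u j‖ ≤ N₂ * ‖v j‖ := by
      intro j
      have h1 : ‖u j‖ ≤ ‖Matrix.toEuclideanLin M₂ (v j)‖ := by
        rw [eunorm_eq, eunorm_eq]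
        apply Real.sqrt_le_sqrt
        have : ∑ q : Fin b × Fin c, (Matrix.toEuclideanLin M₂ (v j) q) ^ 2
            = ∑ j', ∑ k, (Matrix.toEuclideanLin M₂ (v j) (j', k)) ^ 2 := by
          rw [Fintype.sum_prod_type]
        rw [this]
        have hterm : ∀ k, Matrix.toEuclideanLin M₂ (v j) (j, k) = u j k := by
          intro k
          rw [toEL_apply]
          simp [hu, hv, hM₂]
        calc ∑ k, (u j k) ^ 2
            = ∑ k, (Matrix.toEuclideanLin M₂ (v j) (j, k)) ^ 2 := by
              simp only [hterm]
          _ ≤ ∑ j', ∑ k, (Matrix.toEuclideanLin M₂ (v j) (j', k)) ^ 2 :=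
              Finset.single_le_sum (f := fun j' => ∑ k, (Matrix.toEuclideanLin M₂ (v j) (j', k)) ^ 2)
                (fun i _ => Finset.sum_nonneg fun k _ => sq_nonneg _) (Finset.mem_univ j)
      exact h1.trans (le_spectral M₂ (v j))
    have hkey := key_decomp u (fun j => ‖v j‖) N₂ hN₂ (fun j => norm_nonneg _) hub
    rw [hsum]
    have hx : Real.sqrt (∑ j, ‖v j‖ ^ 2) = ‖x‖ := by
      have : ∑ j, ‖v j‖ ^ 2 = ∑ p : Fin a × Fin b, x p ^ 2 := by
        rw [Fintype.sum_prod_type, Finset.sum_comm]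
        congr 1
        funext j
        rw [eunorm_eq, Real.sq_sqrt (Finset.sum_nonneg fun i _ => sq_nonneg _)]
      rw [this, ← eunorm_eq]
    rw [hx] at hkey
    simpa using hkey
  -- Bound with factor √a
  have boundA : matrixSpectralNormL2 M₁ ≤ Real.sqrt a * N₂ := by
    apply spectral_le M₁ (by positivity)
    intro x
    set u : Fin a → EuclideanSpace ℝ (Fin c) :=
      fun i => WithLp.toLp 2 (fun k => ∑ j, T i j k * x (i, j) : Fin c → ℝ) with hu
    set v : Fin a → EuclideanSpace ℝ (Fin b) :=
      fun i => WithLp.toLp 2 (fun j => x (i, j) : Fin b → ℝ) with hv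
    have hsum : Matrix.toEuclideanLin M₁ x = ∑ i, u i := by
      ext k
      rw [WithLp.ofLp_sum, Finset.sum_apply, toEL_apply]
      rw [Fintype.sum_prod_type]
      simp [hu, hM₁]
    have hub : ∀ i, ‖u i‖ ≤ N₂ * ‖v i‖ := by
      intro i
      -- Frobenius bound
      have hcol : ∑ j, ∑ k, (T i j k) ^ 2 ≤ N₂ ^ 2 := by
        have h1 := le_spectral M₂ (EuclideanSpace.single i 1)
        have h2 : ‖Matrix.toEuclideanLin M₂ (EuclideanSpace.single i 1)‖
            = Real.sqrt (∑ j, ∑ k, (T i j k) ^ 2) := by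
          rw [eunorm_eq]
          congr 1
          rw [Fintype.sum_prod_type]
          congr 1
          funext j
          congr 1
          funext k
          rw [toEL_apply]
          simp [hM₂, EuclideanSpace.single_apply]
        have h3 : ‖(EuclideanSpace.single i 1 : EuclideanSpace ℝ (Fin a))‖ = 1 := by
          simp [EuclideanSpace.norm_single]
        rw [h2, h3, mul_one] at h1
        have h4 : (0:ℝ) ≤ ∑ j, ∑ k, (T i j k) ^ 2 :=
          Finset.sum_nonneg fun j _ => Finset.sum_nonneg fun k _ => sq_nonneg _
        calc ∑ j, ∑ k, (T i j k) ^ 2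
            = Real.sqrt (∑ j, ∑ k, (T i j k) ^ 2) ^ 2 := (Real.sq_sqrt h4).symm
          _ ≤ N₂ ^ 2 := pow_le_pow_left₀ (Real.sqrt_nonneg _) h1 2
      have hsq : ‖u i‖ ^ 2 ≤ (N₂ * ‖v i‖) ^ 2 := by
        have husq : ‖u i‖ ^ 2 = ∑ k, (u i k) ^ 2 := by
          rw [eunorm_eq, Real.sq_sqrt (Finset.sum_nonneg fun k _ => sq_nonneg _)]
        have hvsq : ‖v i‖ ^ 2 = ∑ j, x (i, j) ^ 2 := by
          rw [eunorm_eq, Real.sq_sqrt (Finset.sum_nonneg fun j _ => sq_nonneg _)]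
        rw [husq, mul_pow, hvsq]
        calc ∑ k, (u i k) ^ 2
            ≤ ∑ k, (∑ j, (T i j k) ^ 2) * (∑ j, x (i, j) ^ 2) := by
              apply Finset.sum_le_sum
              intro k _
              have := Finset.sum_mul_sq_le_sq_mul_sq Finset.univ
                (fun j => T i j k) (fun j => x (i, j))
              simpa [hu] using this
          _ = (∑ k, ∑ j, (T i j k) ^ 2) * (∑ j, x (i, j) ^ 2) := by
              rw [← Finset.sum_mul]
          _ = (∑ j, ∑ k, (T i j k) ^ 2) * (∑ j, x (i, j) ^ 2) := by
              rw [Finset.sum_comm]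
          _ ≤ N₂ ^ 2 * (∑ j, x (i, j) ^ 2) :=
              mul_le_mul_of_nonneg_right hcol
                (Finset.sum_nonneg fun j _ => sq_nonneg _)
      have h5 : 0 ≤ N₂ * ‖v i‖ := mul_nonneg hN₂ (norm_nonneg _)
      have := Real.sqrt_le_sqrt hsq
      rwa [Real.sqrt_sq (norm_nonneg _), Real.sqrt_sq h5] at this
    have hkey := key_decomp u (fun i => ‖v i‖) N₂ hN₂ (fun i => norm_nonneg _) hub
    rw [hsum]
    have hx : Real.sqrt (∑ i, ‖v i‖ ^ 2) = ‖x‖ := by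
      have : ∑ i, ‖v i‖ ^ 2 = ∑ p : Fin a × Fin b, x p ^ 2 := by
        rw [Fintype.sum_prod_type]
        congr 1
        funext i
        rw [eunorm_eq, Real.sq_sqrt (Finset.sum_nonneg fun j _ => sq_nonneg _)]
      rw [this, ← eunorm_eq]
    rw [hx] at hkey
    simpa using hkey
  -- combine
  have sqA : matrixSpectralNormL2 M₁ ^ 2 ≤ (a : ℝ) * N₂ ^ 2 := by
    calc matrixSpectralNormL2 M₁ ^ 2 ≤ (Real.sqrt a * N₂) ^ 2 := pow_le_pow_left₀ hN₁ boundA 2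
      _ = (a : ℝ) * N₂ ^ 2 := by rw [mul_pow, Real.sq_sqrt (by positivity)]
  have sqB : matrixSpectralNormL2 M₁ ^ 2 ≤ (b : ℝ) * N₂ ^ 2 := by
    calc matrixSpectralNormL2 M₁ ^ 2 ≤ (Real.sqrt b * N₂) ^ 2 := pow_le_pow_left₀ hN₁ boundB 2
      _ = (b : ℝ) * N₂ ^ 2 := by rw [mul_pow, Real.sq_sqrt (by positivity)]
  rcases le_total a b with h | h
  · rw [min_eq_left h]; exact sqA
  · rw [min_eq_right h]; exact sqB
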